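/- Let l ≡ 1 (mod 3) be a prime and H the unique subgroup of order 3 of Δ_l (the cube roots of unity in (ℤ/lℤ)ˣ). Then π_H(𝒥_l) = ℤ[H]. Consequently, if K is a number field such that K ∩ ℚ(ζ_l) is the subfield of ℚ(ζ_l) of degree (l−1)/3 over ℚ (so Gal(K(ζ_l)/K) ≅ H) and π_H(𝒥_l) annihilates Cl(K(ζ_l)), then h_{K(ζ_l)} = 1. -/

import Mathlib

open scoped NumberField nonZeroDivisors
open NumberField

noncomputable section

/-- The Stickelberger element `θ_l ∈ ℚ[(ℤ/l)ˣ]`. -/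
def stickElt (l : ℕ) [NeZero l] : MonoidAlgebra ℚ (ZMod l)ˣ :=
  (l : ℚ)⁻¹ • ∑ a : (ZMod l)ˣ, MonoidAlgebra.single a⁻¹ (((a : ZMod l).val : ℚ))

/-- The canonical map `ℤ[(ℤ/l)ˣ] → ℚ[(ℤ/l)ˣ]`. -/
def zqMap (l : ℕ) : MonoidAlgebra ℤ (ZMod l)ˣ →ₐ[ℤ] MonoidAlgebra ℚ (ZMod l)ˣ :=
  MonoidAlgebra.lift ℤ _ (ZMod l)ˣ (MonoidAlgebra.of ℚ (ZMod l)ˣ)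

/-- The Stickelberger ideal `𝒥_l = ℤ[Δ_l]·θ_l ∩ ℤ[Δ_l]`. -/
def stickIdeal (l : ℕ) [NeZero l] : Set (MonoidAlgebra ℤ (ZMod l)ˣ) :=
  {x | ∃ y : MonoidAlgebra ℤ (ZMod l)ˣ, zqMap l y * stickElt l = zqMap l x}

/-- `act` is the natural action of `Gal(L/K)` on the class group of `L`. -/
def IsClassGroupGalAct (K L : Type*) [Field K] [Field L] [NumberField L] [Algebra K L]
    (act : (L ≃ₐ[K] L) → ClassGroup (𝓞 L) → ClassGroup (𝓞 L)) : Prop :=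
  ∀ (σ : L ≃ₐ[K] L) (I : (Ideal (𝓞 L))⁰)
    (hI : Ideal.map (RingOfIntegers.mapRingEquiv σ : 𝓞 L ≃+* 𝓞 L).toRingHom
        (I : Ideal (𝓞 L)) ∈ (Ideal (𝓞 L))⁰),
    act σ (ClassGroup.mk0 I) = ClassGroup.mk0 ⟨_, hI⟩


/-- The coefficient-projection `π_H : ℤ[Δ_l] → ℤ[H]`. -/
def piH (l : ℕ) [NeZero l] (H : Subgroup (ZMod l)ˣ) (x : MonoidAlgebra ℤ (ZMod l)ˣ) :
    MonoidAlgebra ℤ H :=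
  letI : Fintype H := Fintype.ofFinite H
  ∑ h : H, MonoidAlgebra.single h (x.coeff ↑h)

lemma zqMap_single (l : ℕ) (a : (ZMod l)ˣ) (k : ℤ) :
    zqMap l (MonoidAlgebra.single a k) = MonoidAlgebra.single a (k : ℚ) := by
  unfold zqMap
  rw [MonoidAlgebra.lift_single, MonoidAlgebra.of_apply, MonoidAlgebra.smul_single]
  norm_num

def xElt (l n : ℕ) [NeZero l] : MonoidAlgebra ℤ (ZMod l)ˣ :=
  ∑ b : (ZMod l)ˣ, MonoidAlgebra.single b⁻¹ (((n * (b : ZMod l).val) / l : ℕ) : ℤ)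

lemma xElt_apply (l n : ℕ) [NeZero l] (k : (ZMod l)ˣ) :
    (xElt l n).coeff k = (((n * ((k⁻¹ : (ZMod l)ˣ) : ZMod l).val) / l : ℕ) : ℤ) := by
  classical
  unfold xElt
  rw [MonoidAlgebra.coeff_sum, Finset.sum_apply']
  simp only [MonoidAlgebra.coeff_single]
  rw [Finset.sum_eq_single k⁻¹]
  · rw [Finsupp.single_apply, if_pos (inv_inv k)]
  · intro b _ hb
    rw [Finsupp.single_apply, if_neg]
    intro h; exact hb (by rw [← inv_inv b, h])
  · intro h; exact absurd (Finset.mem_univ _) h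

lemma xElt_mem (l n : ℕ) [NeZero l] [Fact (Nat.Prime l)] (h1 : 0 < n) (h2 : n < l) :
    xElt l n ∈ stickIdeal l := by
  have hl : 0 < l := Nat.pos_of_ne_zero (NeZero.ne l)
  have hcop : n.Coprime l := by
    rw [Nat.coprime_comm]
    exact (Nat.Prime.coprime_iff_not_dvd (Fact.out)).2 (fun hd => absurd (Nat.le_of_dvd h1 hd) (not_le.2 h2))
  set c : (ZMod l)ˣ := ZMod.unitOfCoprime n hcop with hc
  refine ⟨MonoidAlgebra.single 1 (n : ℤ) - MonoidAlgebra.single c 1, ?_⟩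
  rw [map_sub, zqMap_single, zqMap_single, sub_mul]
  unfold stickElt xElt
  rw [mul_smul_comm, mul_smul_comm, Finset.mul_sum, Finset.mul_sum, map_sum, ← smul_sub]
  have key1 : ∀ a : (ZMod l)ˣ, MonoidAlgebra.single (1 : (ZMod l)ˣ) ((n:ℤ):ℚ) *
      MonoidAlgebra.single a⁻¹ (((a : ZMod l).val : ℚ)) =
      MonoidAlgebra.single a⁻¹ ((n * (a : ZMod l).val : ℚ)) := by
    intro a
    rw [MonoidAlgebra.single_mul_single, one_mul]
    push_cast; ring_nf
  have key2 : (∑ a : (ZMod l)ˣ, MonoidAlgebra.single (c : (ZMod l)ˣ) ((1:ℤ):ℚ) *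
      MonoidAlgebra.single a⁻¹ (((a : ZMod l).val : ℚ))) =
      ∑ a : (ZMod l)ˣ, MonoidAlgebra.single a⁻¹ ((((c * a : (ZMod l)ˣ) : ZMod l).val : ℚ)) := by
    rw [← Equiv.sum_comp (Equiv.mulLeft c)]
    refine Finset.sum_congr rfl (fun a _ => ?_)
    rw [MonoidAlgebra.single_mul_single]
    simp [Equiv.mulLeft, mul_inv_rev, mul_comm]
  rw [key2]
  conv_lhs => rw [Finset.sum_congr rfl (fun a _ => key1 a)]
  rw [← Finset.sum_sub_distrib]
  have key3 : ∀ a : (ZMod l)ˣ,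
      MonoidAlgebra.single a⁻¹ ((n * (a : ZMod l).val : ℚ)) -
      MonoidAlgebra.single a⁻¹ ((((c * a : (ZMod l)ˣ) : ZMod l).val : ℚ)) =
      MonoidAlgebra.single a⁻¹ ((l : ℚ) * ((n * (a : ZMod l).val) / l : ℕ)) := by
    intro a
    rw [← MonoidAlgebra.single_sub]
    congr 1
    have hval : (((c * a : (ZMod l)ˣ) : ZMod l)).val = (n * (a : ZMod l).val) % l := by
      push_cast [hc]
      rw [ZMod.val_mul]
      congr 2
      rw [ZMod.coe_unitOfCoprime, ZMod.val_natCast, Nat.mod_eq_of_lt h2]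
    rw [hval]
    have := Nat.div_add_mod (n * (a : ZMod l).val) l
    have : (n * (a : ZMod l).val : ℚ) = l * ((n * (a : ZMod l).val) / l : ℕ) + ((n * (a : ZMod l).val) % l : ℕ) := by
      exact_mod_cast congrArg (fun t : ℕ => (t : ℚ)) this.symm
    rw [this]; push_cast; ring
  conv_lhs => rw [Finset.sum_congr rfl (fun a _ => key3 a)]
  rw [Finset.smul_sum]
  refine Finset.sum_congr rfl (fun a _ => ?_)
  rw [zqMap_single, MonoidAlgebra.smul_single]
  congr 1
  rw [smul_eq_mul, ← mul_assoc, inv_mul_cancel₀ (by exact_mod_cast hl.ne'), one_mul]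
  norm_cast

lemma stick_sub {l : ℕ} [NeZero l] {x₁ x₂ : MonoidAlgebra ℤ (ZMod l)ˣ}
    (h₁ : x₁ ∈ stickIdeal l) (h₂ : x₂ ∈ stickIdeal l) : x₁ - x₂ ∈ stickIdeal l := by
  obtain ⟨y₁, hy₁⟩ := h₁; obtain ⟨y₂, hy₂⟩ := h₂
  exact ⟨y₁ - y₂, by rw [map_sub, sub_mul, hy₁, hy₂, map_sub]⟩

lemma stick_zero {l : ℕ} [NeZero l] : (0 : MonoidAlgebra ℤ (ZMod l)ˣ) ∈ stickIdeal l :=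
  ⟨0, by simp⟩

lemma stick_add {l : ℕ} [NeZero l] {x₁ x₂ : MonoidAlgebra ℤ (ZMod l)ˣ}
    (h₁ : x₁ ∈ stickIdeal l) (h₂ : x₂ ∈ stickIdeal l) : x₁ + x₂ ∈ stickIdeal l := by
  obtain ⟨y₁, hy₁⟩ := h₁; obtain ⟨y₂, hy₂⟩ := h₂
  exact ⟨y₁ + y₂, by rw [map_add, add_mul, hy₁, hy₂, map_add]⟩

lemma stick_smul {l : ℕ} [NeZero l] (z : ℤ) {x : MonoidAlgebra ℤ (ZMod l)ˣ}
    (h : x ∈ stickIdeal l) : z • x ∈ stickIdeal l := by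
  obtain ⟨y, hy⟩ := h
  exact ⟨z • y, by rw [map_zsmul, smul_mul_assoc, hy, map_zsmul]⟩

lemma stick_mul_single {l : ℕ} [NeZero l] (σ : (ZMod l)ˣ) {x : MonoidAlgebra ℤ (ZMod l)ˣ}
    (h : x ∈ stickIdeal l) : MonoidAlgebra.single σ (1:ℤ) * x ∈ stickIdeal l := by
  obtain ⟨y, hy⟩ := h
  exact ⟨MonoidAlgebra.single σ 1 * y, by rw [map_mul, mul_assoc, hy, map_mul]⟩

lemma piH_apply (l : ℕ) [NeZero l] (H : Subgroup (ZMod l)ˣ) (x : MonoidAlgebra ℤ (ZMod l)ˣ)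
    (h : H) : (piH l H x).coeff h = x.coeff ↑h := by
  classical
  letI : Fintype H := Fintype.ofFinite H
  unfold piH
  rw [MonoidAlgebra.coeff_sum, Finset.sum_apply']
  simp only [MonoidAlgebra.coeff_single]
  rw [Finset.sum_eq_single h]
  · rw [Finsupp.single_apply, if_pos rfl]
  · intro k _ hk
    rw [Finsupp.single_apply, if_neg hk]
  · intro hh; exact absurd (Finset.mem_univ _) hh

lemma piH_smul (l : ℕ) [NeZero l] (H : Subgroup (ZMod l)ˣ) (z : ℤ)
    (x : MonoidAlgebra ℤ (ZMod l)ˣ) : piH l H (z • x) = z • piH l H x := by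
  classical
  ext h
  rw [piH_apply, MonoidAlgebra.coeff_smul_apply, MonoidAlgebra.coeff_smul_apply, piH_apply]

lemma piH_mul_single (l : ℕ) [NeZero l] (H : Subgroup (ZMod l)ˣ) (h₀ : H)
    (x : MonoidAlgebra ℤ (ZMod l)ˣ) :
    piH l H (MonoidAlgebra.single ((h₀ : (ZMod l)ˣ)) (1:ℤ) * x) =
      MonoidAlgebra.single h₀ (1:ℤ) * piH l H x := by
  classical
  ext h
  rw [piH_apply, MonoidAlgebra.coeff_single_mul_apply, MonoidAlgebra.coeff_single_mul_apply,
    piH_apply]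
  norm_num

lemma div_endpoint {l m : ℕ} (hm0 : 0 < m) (hml : m < l) : ((l-1)*m)/l = m-1 := by
  have h1 : (l-1)*m = l*m - m := by rw [Nat.sub_mul, one_mul]
  have h2 : (m-1)*l = m*l - l := by rw [Nat.sub_mul, one_mul]
  apply Nat.div_eq_of_lt_le
  · rw [h2, h1, mul_comm m l]; omega
  · rw [h1, Nat.sub_add_cancel hm0, mul_comm m l]
    have : m ≤ l*m := Nat.le_mul_of_pos_left m (lt_trans hm0 hml)
    omega

lemma piH_sum (l : ℕ) [NeZero l] (H : Subgroup (ZMod l)ˣ) {ι : Type*} (t : Finset ι)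
    (f : ι → MonoidAlgebra ℤ (ZMod l)ˣ) :
    piH l H (∑ i ∈ t, f i) = ∑ i ∈ t, piH l H (f i) := by
  classical
  ext h
  rw [piH_apply, MonoidAlgebra.coeff_sum, Finset.sum_apply', MonoidAlgebra.coeff_sum, Finset.sum_apply']
  exact Finset.sum_congr rfl (fun i _ => (piH_apply l H (f i) h).symm)

lemma div_step {l m n : ℕ} (hl : 0 < l) (hml : m < l) :
    n*m/l ≤ (n+1)*m/l ∧ (n+1)*m/l ≤ n*m/l + 1 := by
  constructor
  · exact Nat.div_le_div_right (Nat.mul_le_mul_right _ (Nat.le_succ n))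
  · have h1 : (n+1)*m = n*m + m := by ring
    rw [h1]
    have h2 := Nat.div_add_mod (n*m) l
    have h3 := Nat.mod_lt (n*m) hl
    have h4 : (n*m + m)/l < n*m/l + 2 := by
      rw [Nat.div_lt_iff_lt_mul hl]
      have h5 : (n*m/l + 2)*l = (n*m/l)*l + 2*l := by ring
      have h6 : l * (n*m/l) = (n*m/l) * l := mul_comm _ _
      omega
    omega

/-- Part 1 of statement 13: `π_H(𝒥_l)` is all of `ℤ[H]`. -/
theorem part1 (l : ℕ) [Fact (Nat.Prime l)] [NeZero l]
    (H : Subgroup (ZMod l)ˣ) (hH : Nat.card H = 3) :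
    ∀ z : MonoidAlgebra ℤ H, ∃ x ∈ stickIdeal l, piH l H x = z := by
  classical
  have hlp : Nat.Prime l := Fact.out
  have hl0 : 0 < l := hlp.pos
  have hl2 : 2 ≤ l := hlp.two_le
  haveI : Fact (Nat.Prime 3) := ⟨by norm_num⟩
  haveI : IsCyclic H := isCyclic_of_prime_card hH
  obtain ⟨g, hg⟩ := IsCyclic.exists_generator (α := H)
  have hord : orderOf g = 3 := (orderOf_eq_card_of_forall_mem_zpowers hg).trans hH
  have hg1 : g ≠ 1 := by
    intro h; rw [h, orderOf_one] at hord; omega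
  have hginv : g ≠ g⁻¹ := by
    intro h
    have h2 : g ^ 2 = 1 := by
      rw [pow_two]; nth_rewrite 2 [h]; exact mul_inv_cancel g
    have := orderOf_dvd_of_pow_eq_one h2
    rw [hord] at this; omega
  have h3ord : g ^ 3 = 1 := by rw [← hord]; exact pow_orderOf_eq_one g
  have hgsq : g ^ 2 = g⁻¹ := by
    apply eq_inv_of_mul_eq_one_left
    rw [← pow_succ]
    exact h3ord
  -- the three elements of H
  have hmem3 : ∀ h : H, h = 1 ∨ h = g ∨ h = g⁻¹ := by
    intro h
    obtain ⟨k, hk⟩ := Subgroup.mem_zpowers_iff.mp (hg h)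
    have hk3 : g ^ (k % 3) = h := by
      conv_rhs => rw [← hk]
      have hordz : ((orderOf g : ℕ) : ℤ) = 3 := by rw [hord]; norm_num
      rw [← hordz]
      exact zpow_mod_orderOf g k
    have : k % 3 = 0 ∨ k % 3 = 1 ∨ k % 3 = 2 := by omega
    rcases this with h0 | h1 | h2
    · left; rw [← hk3, h0, zpow_zero]
    · right; left; rw [← hk3, h1, zpow_one]
    · right; right; rw [← hk3, h2, ← hgsq]; norm_cast
  set u : ℕ := ((g : (ZMod l)ˣ) : ZMod l).val with hu
  set v : ℕ := (((g⁻¹ : H) : (ZMod l)ˣ) : ZMod l).val with hv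
  have hcoe_ne : ∀ h₁ h₂ : H, h₁ ≠ h₂ → ((h₁ : (ZMod l)ˣ) : ZMod l) ≠ ((h₂ : (ZMod l)ˣ) : ZMod l) := by
    intro h₁ h₂ hne heq
    exact hne (Subtype.ext (Units.ext heq))
  have hval_lt : ∀ h : H, ((h : (ZMod l)ˣ) : ZMod l).val < l := fun h => ZMod.val_lt _
  have hval_pos : ∀ h : H, 0 < ((h : (ZMod l)ˣ) : ZMod l).val := by
    intro h
    rcases Nat.eq_zero_or_pos ((h : (ZMod l)ˣ) : ZMod l).val with h0 | h0
    · exfalso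
      have : ((h : (ZMod l)ˣ) : ZMod l) = 0 := by
        apply ZMod.val_injective l
        rw [h0, ZMod.val_zero]
      exact (Units.ne_zero _) this
    · exact h0
  have huv : u ≠ v := by
    intro h
    exact hcoe_ne g g⁻¹ hginv (ZMod.val_injective l h)
  have hu_lt : u < l := hval_lt g
  have hv_lt : v < l := hval_lt g⁻¹
  have hu_pos : 0 < u := hval_pos g
  have hv_pos : 0 < v := hval_pos g⁻¹
  have hval1 : (((1 : H) : (ZMod l)ˣ) : ZMod l).val = 1 := by
    simp [ZMod.val_one_eq_one_mod, Nat.mod_eq_of_lt hl2]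
  -- existence of a good n
  have hex : ∃ n : ℕ, 1 ≤ n ∧ n ≤ l - 2 ∧
      ((((n+1)*v)/l : ℕ) : ℤ) - (((n*v)/l : ℕ) : ℤ) ≠
      ((((n+1)*u)/l : ℕ) : ℤ) - (((n*u)/l : ℕ) : ℤ) := by
    by_contra hno
    push_neg at hno
    have htel : ∀ m : ℕ, 0 < m → m < l →
        (∑ i ∈ Finset.range (l-2),
          (((((i+2)*m)/l : ℕ) : ℤ) - ((((i+1)*m)/l : ℕ) : ℤ))) = (m : ℤ) - 1 := by
      intro m hm0 hml
      have := Finset.sum_range_sub (fun i => ((((i+1)*m)/l : ℕ) : ℤ)) (l-2)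
      rw [this]
      have e1 : l - 2 + 1 = l - 1 := by omega
      rw [e1, div_endpoint hm0 hml]
      simp only [zero_add, one_mul]
      rw [Nat.div_eq_of_lt hml]
      push_cast [Nat.cast_sub hm0]
      ring
    have hveq : ∀ i ∈ Finset.range (l-2),
        (((((i+2)*v)/l : ℕ) : ℤ) - ((((i+1)*v)/l : ℕ) : ℤ)) =
        (((((i+2)*u)/l : ℕ) : ℤ) - ((((i+1)*u)/l : ℕ) : ℤ)) := by
      intro i hi
      rw [Finset.mem_range] at hi
      have := hno (i+1) (by omega) (by omega)
      convert this using 3 <;> ring_nf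
    have := (Finset.sum_congr rfl hveq)
    rw [htel v hv_pos hv_lt, htel u hu_pos hu_lt] at this
    have : (v : ℤ) = u := by omega
    exact huv (by exact_mod_cast this.symm)
  obtain ⟨n, hn1, hn2, hne⟩ := hex
  haveI : Fact (1 < l) := ⟨by omega⟩
  have hnl : n < l := by omega
  have hn1l : n + 1 < l := by omega
  have hd_mem : xElt l (n+1) - xElt l n ∈ stickIdeal l :=
    stick_sub (xElt_mem l (n+1) (by omega) hn1l) (xElt_mem l n (by omega) hnl)
  set d := xElt l (n+1) - xElt l n with hd
  obtain ⟨hbmono, hbstep⟩ := div_step (l := l) (m := v) (n := n) hl0 hv_lt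
  obtain ⟨hemono, hestep⟩ := div_step (l := l) (m := u) (n := n) hl0 hu_lt
  have hcases : ((((n+1)*v)/l : ℕ) : ℤ) - (((n*v)/l : ℕ) : ℤ) = 1 ∧
      ((((n+1)*u)/l : ℕ) : ℤ) - (((n*u)/l : ℕ) : ℤ) = 0 ∨
      ((((n+1)*v)/l : ℕ) : ℤ) - (((n*v)/l : ℕ) : ℤ) = 0 ∧
      ((((n+1)*u)/l : ℕ) : ℤ) - (((n*u)/l : ℕ) : ℤ) = 1 := by omega
  have hvinv : (((g : (ZMod l)ˣ)⁻¹ : (ZMod l)ˣ) : ZMod l).val = v := by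
    rw [hv]; norm_cast
  have huinv : ((((g⁻¹ : H) : (ZMod l)ˣ)⁻¹ : (ZMod l)ˣ) : ZMod l).val = u := by
    rw [hu]; norm_cast
  have h1inv : ((((1 : H) : (ZMod l)ˣ)⁻¹ : (ZMod l)ˣ) : ZMod l).val = 1 := by
    norm_cast
  have hd1 : d.coeff (((1 : H) : (ZMod l)ˣ)) = 0 := by
    rw [hd, MonoidAlgebra.coeff_sub, Finsupp.sub_apply, xElt_apply, xElt_apply, h1inv, mul_one, mul_one,
      Nat.div_eq_of_lt hn1l, Nat.div_eq_of_lt hnl]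
    simp
  have hdg : d.coeff ((g : (ZMod l)ˣ)) = ((((n+1)*v)/l : ℕ) : ℤ) - (((n*v)/l : ℕ) : ℤ) := by
    rw [hd, MonoidAlgebra.coeff_sub, Finsupp.sub_apply, xElt_apply, xElt_apply, hvinv]
  have hdginv : d.coeff (((g⁻¹ : H) : (ZMod l)ˣ)) =
      ((((n+1)*u)/l : ℕ) : ℤ) - (((n*u)/l : ℕ) : ℤ) := by
    rw [hd, MonoidAlgebra.coeff_sub, Finsupp.sub_apply, xElt_apply, xElt_apply, huinv]
  have hkey : ∃ s : H, s ≠ 1 ∧ ∃ x₀ ∈ stickIdeal l,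
      piH l H x₀ = MonoidAlgebra.single s (1:ℤ) := by
    rcases hcases with ⟨hb, he⟩ | ⟨hb, he⟩
    · refine ⟨g, hg1, d, hd_mem, ?_⟩
      ext h
      rw [piH_apply]
      rcases hmem3 h with rfl | rfl | rfl
      · rw [hd1, MonoidAlgebra.coeff_single, Finsupp.single_apply, if_neg hg1]
      · rw [hdg, hb, MonoidAlgebra.coeff_single, Finsupp.single_eq_same]
      · rw [hdginv, he, MonoidAlgebra.coeff_single, Finsupp.single_apply, if_neg hginv]
    · refine ⟨g⁻¹, fun hcon => hg1 (inv_eq_one.mp hcon), d, hd_mem, ?_⟩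
      ext h
      rw [piH_apply]
      rcases hmem3 h with rfl | rfl | rfl
      · rw [hd1, MonoidAlgebra.coeff_single, Finsupp.single_apply, if_neg (fun hcon => hg1 (inv_eq_one.mp hcon))]
      · rw [hdg, hb, MonoidAlgebra.coeff_single, Finsupp.single_apply, if_neg (fun hcon => hginv hcon.symm)]
      · rw [hdginv, he, MonoidAlgebra.coeff_single, Finsupp.single_eq_same]
  obtain ⟨s, -, x₀, hx₀mem, hx₀⟩ := hkey
  intro z
  refine ⟨∑ h : H, (z.coeff (h*s)) • (MonoidAlgebra.single ((h : (ZMod l)ˣ)) (1:ℤ) * x₀), ?_, ?_⟩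
  · apply Finset.sum_induction _ _ (fun a b ha hb => stick_add ha hb) stick_zero
    intro h _
    exact stick_smul _ (stick_mul_single _ hx₀mem)
  · rw [piH_sum]
    have hterm : ∀ h : H, piH l H ((z.coeff (h*s)) • (MonoidAlgebra.single ((h : (ZMod l)ˣ)) (1:ℤ) * x₀)) =
        MonoidAlgebra.single (h*s) (z.coeff (h*s)) := by
      intro h
      rw [piH_smul, piH_mul_single, hx₀, MonoidAlgebra.single_mul_single, one_mul,
        MonoidAlgebra.smul_single, smul_eq_mul, mul_one]
    rw [Finset.sum_congr rfl (fun h _ => hterm h)]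
    rw [Fintype.sum_equiv (Equiv.mulRight s)
      (fun h : H => MonoidAlgebra.single (h*s) (z.coeff (h*s)))
      (fun k : H => MonoidAlgebra.single k (z.coeff k)) (fun h => by simp)]
    exact MonoidAlgebra.coeff_injective (by simp only [MonoidAlgebra.coeff_sum, MonoidAlgebra.coeff_single]; exact Finsupp.univ_sum_single z.coeff)


/-- Let `l ≡ 1 (mod 3)` be a prime and `H` the unique subgroup of order 3
of `Δ_l`.  Then `π_H(𝒥_l) = ℤ[H]`.  Consequently, if `K` is a number field such that
`K ∩ ℚ(ζ_l)` is the subfield of `ℚ(ζ_l)` of degree `(l-1)/3` over `ℚ`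
(so `Gal(K(ζ_l)/K) ≅ H` via `autToPow`) and `π_H(𝒥_l)` annihilates `Cl(K(ζ_l))`,
then `h_{K(ζ_l)} = 1`. -/
theorem stmt13 (l : ℕ) [Fact (Nat.Prime l)] [NeZero l] (hl : l % 3 = 1)
    (H : Subgroup (ZMod l)ˣ) (hH : Nat.card H = 3) :
    (∀ z : MonoidAlgebra ℤ H, ∃ x ∈ stickIdeal l, piH l H x = z) ∧
    (∀ (K L : Type) [Field K] [NumberField K] [Field L] [NumberField L] [Algebra K L]
      (ζ : L) (hζ : IsPrimitiveRoot ζ l),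
      IntermediateField.adjoin K {ζ} = ⊤ →
      Function.Injective (hζ.autToPow K) →
      (hζ.autToPow K).range = H →
      ∀ act : (L ≃ₐ[K] L) → ClassGroup (𝓞 L) → ClassGroup (𝓞 L),
        IsClassGroupGalAct K L act →
        (∀ x ∈ stickIdeal l, ∀ c : ClassGroup (𝓞 L),
          ∏ σ : L ≃ₐ[K] L, act σ c ^ (x.coeff (hζ.autToPow K σ)) = 1) →
        classNumber L = 1) := by
  constructor
  · exact part1 l H hH
  · intro K L _ _ _ _ _ ζ hζ _hadj hinj hrange act hact hann
    classical
    obtain ⟨x, hxmem, hx⟩ := part1 l H hH (MonoidAlgebra.single 1 1)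
    rw [NumberField.classNumber, Fintype.card_eq_one_iff]
    refine ⟨1, fun c => ?_⟩
    obtain ⟨I, rfl⟩ := ClassGroup.mk0_surjective c
    have hprod := hann x hxmem (ClassGroup.mk0 I)
    have hcoef : ∀ σ : L ≃ₐ[K] L, x.coeff (hζ.autToPow K σ) = if σ = 1 then 1 else 0 := by
      intro σ
      have hmemH : hζ.autToPow K σ ∈ H := by rw [← hrange]; exact ⟨σ, rfl⟩
      have hph := piH_apply l H x (⟨hζ.autToPow K σ, hmemH⟩ : H)
      rw [hx] at hph
      rw [← hph, MonoidAlgebra.coeff_single, Finsupp.single_apply]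
      by_cases hσ : σ = 1
      · rw [if_pos hσ, if_pos]
        subst hσ
        ext
        simp
      · rw [if_neg hσ, if_neg]
        intro hcon
        apply hσ
        apply hinj
        have : ((1 : H) : (ZMod l)ˣ) = hζ.autToPow K σ := by rw [hcon]
        rw [← this, map_one]
        rfl
    have hstep : ∀ σ : L ≃ₐ[K] L,
        act σ (ClassGroup.mk0 I) ^ (x.coeff (hζ.autToPow K σ)) =
        if σ = 1 then act σ (ClassGroup.mk0 I) else 1 := by
      intro σ
      rw [hcoef σ]
      split
      · exact zpow_one _
      · exact zpow_zero _
    rw [Finset.prod_congr rfl (fun σ _ => hstep σ), Finset.prod_ite_eq'] at hprod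
    rw [if_pos (Finset.mem_univ _)] at hprod
    have hI' : Ideal.map ((RingOfIntegers.mapRingEquiv (1 : L ≃ₐ[K] L) :
        𝓞 L ≃+* 𝓞 L)).toRingHom (I : Ideal (𝓞 L)) = (I : Ideal (𝓞 L)) := by
      have hid : ((RingOfIntegers.mapRingEquiv (1 : L ≃ₐ[K] L) : 𝓞 L ≃+* 𝓞 L)).toRingHom =
          RingHom.id (𝓞 L) := by
        ext a
        rfl
      rw [hid, Ideal.map_id]
    have hact1 := hact 1 I (by rw [hI']; exact I.2)
    have : act 1 (ClassGroup.mk0 I) = ClassGroup.mk0 I := by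
      rw [hact1]
      congr 1
      exact Subtype.ext hI'
    rw [this] at hprod
    exact hprod

end
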